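/- Let P be a finite subset of the Euclidean plane ℝ² and let x ∈ 𝒱(P) be a Voronoi vertex. Then the degree of x equals the number of generators on its empty circle: the number of unordered pairs {p, p'} of distinct points of P such that x ∈ V_P(p) ∩ V_P(p') and V_P(p) ∩ V_P(p') contains more than one point equals (N_P(x)).ncard. -/

import Mathlib

open Set

abbrev Plane : Type := EuclideanSpace ℝ (Fin 2)

/-- The Voronoi cell of a generator `p` for a generating set `P`. -/
def cell (P : Set Plane) (p : Plane) : Set Plane :=
  {x : Plane | ∀ q ∈ P, dist x p ≤ dist x q}

/-- The set of nearest generators of `x` in `P`. -/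
def nearest (P : Set Plane) (x : Plane) : Set Plane :=
  {p ∈ P | ∀ q ∈ P, dist x p ≤ dist x q}

/-- The Voronoi vertex set: points with at least 3 nearest generators. -/
def vtx (P : Set Plane) : Set Plane :=
  {x : Plane | 3 ≤ (nearest P x).encard}

/-- The boundary of a point set: its points on the frontier of its convex hull. -/
def Bd (S : Set Plane) : Set Plane :=
  S ∩ frontier (convexHull ℝ S)

/-- The number of instances of cocircularity. -/
noncomputable def Ic (P : Set Plane) : ℤ :=
  ∑ᶠ x ∈ vtx P, (((nearest P x).ncard : ℤ) - 3)

section Aux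

open Real Complex
open scoped RealInnerProductSpace


lemma cosle {δ ψ : ℝ} (h0 : 0 < δ) (hπ : δ ≤ π) (h1 : δ ≤ |ψ|) (h2 : |ψ| ≤ 2*π - δ) :
    Real.cos ψ ≤ Real.cos δ := by
  rw [← Real.cos_abs ψ]
  rcases le_or_gt (|ψ|) π with h | h
  · exact Real.cos_le_cos_of_nonneg_of_le_pi h0.le h h1
  · rw [← Real.cos_two_pi_sub]
    exact Real.cos_le_cos_of_nonneg_of_le_pi h0.le (by linarith) (by linarith)

lemma coslt {δ ψ : ℝ} (h0 : 0 < δ) (hπ : δ ≤ π) (h1 : δ < |ψ|) (h2 : |ψ| < 2*π - δ) :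
    Real.cos ψ < Real.cos δ := by
  rw [← Real.cos_abs ψ]
  rcases le_or_gt (|ψ|) π with h | h
  · exact Real.strictAntiOn_cos ⟨h0.le, hπ⟩ ⟨by positivity, h⟩ h1
  · rw [← Real.cos_two_pi_sub]
    exact Real.strictAntiOn_cos ⟨h0.le, hπ⟩ ⟨by linarith, by linarith⟩ (by linarith)

lemma cosgt {δ ψ : ℝ} (hπ : δ ≤ π) (h1 : |ψ| < δ) : Real.cos δ < Real.cos ψ := by
  rw [← Real.cos_abs ψ]
  exact Real.strictAntiOn_cos ⟨abs_nonneg ψ, h1.le.trans hπ⟩ ⟨(abs_nonneg ψ).trans h1.le, hπ⟩ h1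

/-- Adjacency of two angles with respect to an angle set. -/
def Adj (Θ : Finset ℝ) (s t : ℝ) : Prop :=
  ∃ φ : ℝ, ∀ θ ∈ Θ, Real.cos (θ - φ) ≤ Real.cos (s - φ) ∧ Real.cos (θ - φ) ≤ Real.cos (t - φ)

lemma adj_comm {Θ : Finset ℝ} {s t : ℝ} (h : Adj Θ s t) : Adj Θ t s := by
  obtain ⟨φ, hφ⟩ := h
  exact ⟨φ, fun θ hθ => ⟨(hφ θ hθ).2, (hφ θ hθ).1⟩⟩

lemma adj_of_consec {Θ : Finset ℝ} (hsub : ∀ θ ∈ Θ, θ ∈ Set.Ioc (-π) π) {s t : ℝ}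
    (hs : s ∈ Θ) (ht : t ∈ Θ) (hst : s < t) (hgap : ∀ θ ∈ Θ, θ ≤ s ∨ t ≤ θ) :
    Adj Θ s t := by
  refine ⟨(s+t)/2, fun θ hθ => ?_⟩
  obtain ⟨hs1, hs2⟩ := hsub s hs
  obtain ⟨ht1, ht2⟩ := hsub t ht
  obtain ⟨hθ1, hθ2⟩ := hsub θ hθ
  set δ : ℝ := (t-s)/2 with hδ
  have hδ0 : 0 < δ := by simp only [hδ]; linarith
  have hδπ : δ ≤ π := by simp only [hδ]; linarith
  have hc : Real.cos (s - (s+t)/2) = Real.cos δ := by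
    rw [show s - (s+t)/2 = -δ by simp only [hδ]; ring, Real.cos_neg]
  have hc' : Real.cos (t - (s+t)/2) = Real.cos δ := by
    rw [show t - (s+t)/2 = δ by simp only [hδ]; ring]
  have key : Real.cos (θ - (s+t)/2) ≤ Real.cos δ := by
    apply cosle hδ0 hδπ
    · rcases hgap θ hθ with h | h
      · exact le_abs.2 (Or.inr (by simp only [hδ]; linarith))
      · exact le_abs.2 (Or.inl (by simp only [hδ]; linarith))
    · rw [abs_le]
      constructor <;> [skip; skip] <;> simp only [hδ] <;> linarith
  rw [hc, hc']
  exact ⟨key, key⟩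

lemma adj_minmax {Θ : Finset ℝ} (hsub : ∀ θ ∈ Θ, θ ∈ Set.Ioc (-π) π) {s t : ℝ}
    (hs : s ∈ Θ) (ht : t ∈ Θ) (hst : s < t) (hbet : ∀ θ ∈ Θ, s ≤ θ ∧ θ ≤ t) :
    Adj Θ s t := by
  obtain ⟨hs1, hs2⟩ := hsub s hs
  obtain ⟨ht1, ht2⟩ := hsub t ht
  set δ : ℝ := π - (t-s)/2 with hδ
  have hδ0 : 0 < δ := by simp only [hδ]; linarith
  have hδπ : δ ≤ π := by simp only [hδ]; linarith
  refine ⟨t + δ, fun θ hθ => ?_⟩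
  obtain ⟨hb1, hb2⟩ := hbet θ hθ
  have hc : Real.cos (s - (t + δ)) = Real.cos δ := by
    rw [show s - (t + δ) = δ - 2*π by simp only [hδ]; ring, Real.cos_sub_two_pi]
  have hc' : Real.cos (t - (t + δ)) = Real.cos δ := by
    rw [show t - (t + δ) = -δ by ring, Real.cos_neg]
  have key : Real.cos (θ - (t + δ)) ≤ Real.cos δ := by
    apply cosle hδ0 hδπ
    · exact le_abs.2 (Or.inr (by linarith))
    · rw [abs_le]
      constructor <;> simp only [hδ] <;> linarith
  rw [hc, hc']
  exact ⟨key, key⟩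

lemma adj_char {Θ : Finset ℝ} (hsub : ∀ θ ∈ Θ, θ ∈ Set.Ioc (-π) π) {s t : ℝ}
    (hs : s ∈ Θ) (ht : t ∈ Θ) (hst : s < t) (hadj : Adj Θ s t) :
    (∀ θ ∈ Θ, θ ≤ s ∨ t ≤ θ) ∨ (∀ θ ∈ Θ, s ≤ θ ∧ θ ≤ t) := by
  obtain ⟨hs1, hs2⟩ := hsub s hs
  obtain ⟨ht1, ht2⟩ := hsub t ht
  by_contra hcon
  push_neg at hcon
  obtain ⟨h1, h2⟩ := hcon
  obtain ⟨θ₀, hθ₀Θ, hθ₀s, hθ₀t⟩ := h1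
  obtain ⟨θ₁, hθ₁Θ, hθ₁⟩ := h2
  have hθ₁' : θ₁ < s ∨ t < θ₁ := by
    rcases lt_or_ge θ₁ s with h | h
    exacts [Or.inl h, Or.inr (hθ₁ h)]
  obtain ⟨φ, hφ⟩ := hadj
  have hceq : Real.cos (s - φ) = Real.cos (t - φ) :=
    le_antisymm ((hφ s hs).2 ) ((hφ t ht).1)
  set ψ : ℝ := (s+t)/2 with hψ
  set δ : ℝ := (t-s)/2 with hδ
  have hδ0 : 0 < δ := by simp only [hδ]; linarith
  have hδπ : δ ≤ π := by simp only [hδ]; linarith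
  rw [Real.cos_eq_cos_iff] at hceq
  obtain ⟨k, hk | hk⟩ := hceq
  · -- t - φ = 2kπ + (s - φ): impossible
    have hts : t - s = 2 * k * π := by linarith
    have hk0 : (0:ℝ) < 2 * k * π := by rw [← hts]; linarith
    have hk1 : (2:ℝ) * k * π < 2 * π := by rw [← hts]; linarith
    have hkpos : 0 < k := by
      by_contra hkn
      push_neg at hkn
      have : (k:ℝ) ≤ 0 := by exact_mod_cast hkn
      nlinarith [Real.pi_pos]
    have : (1:ℝ) ≤ (k:ℝ) := by exact_mod_cast hkpos
    nlinarith [Real.pi_pos]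
  · -- t - φ = 2kπ - (s - φ), so φ = ψ - kπ
    have hφeq : φ = ψ - k * π := by simp only [hψ]; linarith
    have hkey : ∀ θ : ℝ, Real.cos (θ - φ) = (-1)^k * Real.cos (θ - ψ) := by
      intro θ
      rw [hφeq, show θ - (ψ - k * π) = (θ - ψ) + k * π by ring,
        Real.cos_add_int_mul_pi]
    have hsψ : Real.cos (s - ψ) = Real.cos δ := by
      rw [show s - ψ = -δ by simp only [hψ, hδ]; ring, Real.cos_neg]
    rcases Int.even_or_odd k with hk2 | hk2
    · -- even: for all θ, cos(θ-ψ) ≤ cos δ; contradict with θ₀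
      have hone : ((-1:ℝ))^k = 1 := hk2.neg_one_zpow
      have hle : Real.cos (θ₀ - ψ) ≤ Real.cos δ := by
        have := (hφ θ₀ hθ₀Θ).1
        rw [hkey, hkey, hone, one_mul, one_mul, hsψ] at this
        exact this
      have : Real.cos δ < Real.cos (θ₀ - ψ) := by
        apply cosgt hδπ
        rw [abs_lt]
        constructor <;> simp only [hψ, hδ] <;> linarith
      linarith
    · -- odd: for all θ, cos(θ-ψ) ≥ cos δ; contradict with θ₁
      have hone : ((-1:ℝ))^k = -1 := hk2.neg_one_zpow
      have hge : Real.cos δ ≤ Real.cos (θ₁ - ψ) := by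
        have := (hφ θ₁ hθ₁Θ).1
        rw [hkey, hkey, hone, hsψ] at this
        linarith
      obtain ⟨hθ₁1, hθ₁2⟩ := hsub θ₁ hθ₁Θ
      have : Real.cos (θ₁ - ψ) < Real.cos δ := by
        apply coslt hδ0 hδπ
        · rcases hθ₁' with h | h
          · exact lt_abs.2 (Or.inr (by simp only [hψ, hδ]; linarith))
          · exact lt_abs.2 (Or.inl (by simp only [hψ, hδ]; linarith))
        · rw [abs_lt]
          constructor <;> simp only [hψ, hδ] <;> linarith
      linarith

lemma core_count (Θ : Finset ℝ) (hsub : ∀ θ ∈ Θ, θ ∈ Set.Ioc (-π) π) (h3 : 3 ≤ Θ.card) :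
    {e : Set ℝ | ∃ s ∈ Θ, ∃ t ∈ Θ, s ≠ t ∧ e = {s, t} ∧ Adj Θ s t}.ncard = Θ.card := by
  have hne : Θ.Nonempty := Finset.card_pos.1 (by omega)
  set M := Θ.max' hne with hM
  set m := Θ.min' hne with hm
  have hmM : m < M := Θ.min'_lt_max'_of_card (by omega)
  have hthird : ∃ θ ∈ Θ, θ ≠ m ∧ θ ≠ M := by
    by_contra hc
    push_neg at hc
    have hsubmM : Θ ⊆ {m, M} := by
      intro θ hθ
      rcases eq_or_ne θ m with h | h
      · simp [h]
      · simp [hc θ hθ h]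
    have := Finset.card_le_card hsubmM
    have h2 : ({m, M} : Finset ℝ).card ≤ 2 := Finset.card_insert_le _ _ |>.trans (by simp)
    omega
  -- the next element after s
  set nxt : ℝ → ℝ := fun s =>
    if h : (Θ.filter (fun t => s < t)).Nonempty then (Θ.filter (fun t => s < t)).min' h else s
    with hnxt
  have hfilt : ∀ s ∈ Θ, s ≠ M → (Θ.filter (fun t => s < t)).Nonempty := by
    intro s hs hsM
    exact ⟨M, Finset.mem_filter.2 ⟨Θ.max'_mem hne, lt_of_le_of_ne (Θ.le_max' s hs) hsM⟩⟩
  have hnxt_mem : ∀ s ∈ Θ, s ≠ M → nxt s ∈ Θ := by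
    intro s hs hsM
    simp only [hnxt, dif_pos (hfilt s hs hsM)]
    exact (Finset.mem_filter.1 ((Θ.filter (fun t => s < t)).min'_mem _)).1
  have hnxt_gt : ∀ s ∈ Θ, s ≠ M → s < nxt s := by
    intro s hs hsM
    simp only [hnxt, dif_pos (hfilt s hs hsM)]
    exact (Finset.mem_filter.1 ((Θ.filter (fun t => s < t)).min'_mem _)).2
  have hnxt_min : ∀ s ∈ Θ, s ≠ M → ∀ θ ∈ Θ, s < θ → nxt s ≤ θ := by
    intro s hs hsM θ hθ hsθ
    simp only [hnxt, dif_pos (hfilt s hs hsM)]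
    exact Finset.min'_le _ θ (Finset.mem_filter.2 ⟨hθ, hsθ⟩)
  set g : ℝ → Set ℝ := fun s => if s = M then {m, M} else {s, nxt s} with hg
  have himg : {e : Set ℝ | ∃ s ∈ Θ, ∃ t ∈ Θ, s ≠ t ∧ e = {s, t} ∧ Adj Θ s t} = g '' ↑Θ := by
    ext e
    simp only [Set.mem_setOf_eq, Set.mem_image, Finset.mem_coe]
    constructor
    · rintro ⟨s, hs, t, ht, hst, rfl, hadj⟩
      -- wlog s < t
      have main : ∀ s t : ℝ, s ∈ Θ → t ∈ Θ → s < t → Adj Θ s t →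
          ∃ a ∈ Θ, g a = {s, t} := by
        intro s t hs ht hlt hadj
        rcases adj_char hsub hs ht hlt hadj with hgap | hbet
        · -- consecutive: t = nxt s
          have hsM : s ≠ M := by
            intro h
            rw [h] at hlt
            exact absurd (Θ.le_max' t ht) (not_le.2 hlt)
          have h1 : nxt s ≤ t := hnxt_min s hs hsM t ht hlt
          have h2 : t ≤ nxt s := by
            rcases hgap (nxt s) (hnxt_mem s hs hsM) with h | h
            · exact absurd (hnxt_gt s hs hsM) (not_lt.2 h)
            · exact h
          exact ⟨s, hs, by simp only [hg, if_neg hsM, le_antisymm h1 h2]⟩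
        · -- s = m, t = M
          have hsm : s = m := le_antisymm ((hbet m (Θ.min'_mem hne)).1) (Θ.min'_le s hs)
          have htM : t = M := le_antisymm (Θ.le_max' t ht) ((hbet M (Θ.max'_mem hne)).2)
          exact ⟨M, Θ.max'_mem hne, by simp only [hg, if_pos rfl, hsm, htM]⟩
      rcases hst.lt_or_gt with h | h
      · exact main s t hs ht h hadj
      · rw [Set.pair_comm]
        exact main t s ht hs h (adj_comm hadj)
    · rintro ⟨s, hs, rfl⟩
      rcases eq_or_ne s M with hsM | hsM
      · refine ⟨m, Θ.min'_mem hne, M, Θ.max'_mem hne, hmM.ne, by simp [hg, hsM], ?_⟩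
        exact adj_minmax hsub (Θ.min'_mem hne) (Θ.max'_mem hne) hmM
          (fun θ hθ => ⟨Θ.min'_le θ hθ, Θ.le_max' θ hθ⟩)
      · refine ⟨s, hs, nxt s, hnxt_mem s hs hsM, (hnxt_gt s hs hsM).ne, by simp [hg, hsM], ?_⟩
        apply adj_of_consec hsub hs (hnxt_mem s hs hsM) (hnxt_gt s hs hsM)
        intro θ hθ
        rcases le_or_gt θ s with h | h
        · exact Or.inl h
        · exact Or.inr (hnxt_min s hs hsM θ hθ h)
  have hinj : Set.InjOn g ↑Θ := by
    intro a ha b hb hab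
    by_contra hne'
    -- helper: a ≠ M and b ≠ M case symmetry
    have key : ∀ a b : ℝ, a ∈ Θ → b ∈ Θ → a ≠ b → a = M → g a = g b → False := by
      intro a b ha hb hab haM heq
      have hbM : b ≠ M := fun h => hab (haM.trans h.symm)
      simp only [hg, if_pos haM, if_neg hbM] at heq
      have hbmem : b ∈ ({m, M} : Set ℝ) := by rw [heq]; left; rfl
      have hbm : b = m := by
        rcases hbmem with h | h
        · exact h
        · exact absurd h hbM
      have hnmem : nxt b ∈ ({m, M} : Set ℝ) := by rw [heq]; right; rfl
      have hnM : nxt b = M := by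
        rcases hnmem with h | h
        · exact absurd (h ▸ hnxt_gt b hb hbM) (by rw [hbm]; exact lt_irrefl m)
        · exact h
      obtain ⟨c, hc, hcm, hcM⟩ := hthird
      have h1 : b < c := by
        rw [hbm]
        exact lt_of_le_of_ne (Θ.min'_le c hc) (Ne.symm hcm)
      have h2 : nxt b ≤ c := hnxt_min b hb hbM c hc h1
      rw [hnM] at h2
      exact hcM (le_antisymm (Θ.le_max' c hc) h2)
    rcases eq_or_ne a M with haM | haM
    · exact key a b ha hb hne' haM hab
    rcases eq_or_ne b M with hbM | hbM
    · exact key b a hb ha (Ne.symm hne') hbM hab.symm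
    simp only [hg, if_neg haM, if_neg hbM] at hab
    have hamem : a ∈ ({b, nxt b} : Set ℝ) := by rw [← hab]; left; rfl
    have hbmem : b ∈ ({a, nxt a} : Set ℝ) := by rw [hab]; left; rfl
    have ha' : a = nxt b := by
      rcases hamem with h | h
      · exact absurd h hne'
      · exact h
    have hb' : b = nxt a := by
      rcases hbmem with h | h
      · exact absurd h (Ne.symm hne')
      · exact h
    have := hnxt_gt a ha haM
    have := hnxt_gt b hb hbM
    rw [← hb'] at *
    rw [← ha'] at *
    linarith
  rw [himg, Set.ncard_image_of_injOn hinj, Set.ncard_coe_finset]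




def toC (v : Plane) : ℂ := ⟨v 0, v 1⟩

lemma toC_inj {a b : Plane} (h : toC a = toC b) : a = b := by
  have h1 : a 0 = b 0 := congrArg Complex.re h
  have h2 : a 1 = b 1 := congrArg Complex.im h
  ext i
  fin_cases i <;> assumption

lemma toC_zero : toC (0 : Plane) = 0 := by
  simp [toC, Complex.ext_iff]

lemma inner_plane (u v : Plane) : ⟪u, v⟫ = u 0 * v 0 + u 1 * v 1 := by
  simp [PiLp.inner_apply, RCLike.inner_apply, Fin.sum_univ_two]
  ring

lemma norm_plane (v : Plane) : ‖v‖ = ‖toC v‖ := by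
  rw [EuclideanSpace.norm_eq, Complex.norm_def, Complex.normSq_apply]
  congr 1
  simp [Fin.sum_univ_two, toC, sq_abs]
  ring

lemma inner_toC (u v : Plane) : ⟪u, v⟫ = ((starRingEnd ℂ) (toC u) * toC v).re := by
  rw [inner_plane]
  simp [toC, Complex.mul_re]

lemma ipcos2 (φ : ℝ) (z : ℂ) :
    ((starRingEnd ℂ) (Complex.exp (φ * Complex.I)) * z).re
      = ‖z‖ * Real.cos (z.arg - φ) := by
  rcases eq_or_ne z 0 with rfl | hz
  · simp
  · have habs : ‖z‖ ≠ 0 := norm_ne_zero_iff.mpr hz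
    have lhs : ((starRingEnd ℂ) (Complex.exp (φ * Complex.I)) * z).re
        = Real.cos φ * z.re + Real.sin φ * z.im := by
      rw [Complex.exp_mul_I]
      simp [← Complex.ofReal_cos, ← Complex.ofReal_sin, Complex.mul_re]
      try ring
    rw [lhs, Real.cos_sub, Complex.cos_arg hz, Complex.sin_arg]
    field_simp
    try ring

lemma ipcos (w z : ℂ) :
    ((starRingEnd ℂ) w * z).re
      = ‖w‖ * (‖z‖ * Real.cos (z.arg - w.arg)) := by
  conv_lhs => rw [← Complex.norm_mul_exp_arg_mul_I w]
  rw [map_mul, Complex.conj_ofReal, mul_assoc]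
  rw [show ((‖w‖ : ℂ) * ((starRingEnd ℂ) (Complex.exp (w.arg * Complex.I)) * z)).re
      = ‖w‖ * ((starRingEnd ℂ) (Complex.exp (w.arg * Complex.I)) * z).re by
    simp [Complex.re_ofReal_mul]]
  rw [ipcos2]


lemma exists_pos_le {α : Type*} (F : Set α) (hF : F.Finite) (f : α → ℝ)
    (hf : ∀ q ∈ F, 0 < f q) : ∃ t : ℝ, 0 < t ∧ ∀ q ∈ F, t ≤ f q := by
  rcases F.eq_empty_or_nonempty with rfl | ⟨q₀, hq₀⟩
  · exact ⟨1, one_pos, by simp⟩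
  · have hne : (hF.toFinset.image f).Nonempty :=
      ⟨f q₀, Finset.mem_image.2 ⟨q₀, hF.mem_toFinset.2 hq₀, rfl⟩⟩
    refine ⟨(hF.toFinset.image f).min' hne, ?_, ?_⟩
    · obtain ⟨q, hq, hEq⟩ := Finset.mem_image.1 ((hF.toFinset.image f).min'_mem hne)
      rw [← hEq]
      exact hf q (hF.mem_toFinset.1 hq)
    · intro q hq
      exact Finset.min'_le _ _ (Finset.mem_image.2 ⟨q, hF.mem_toFinset.2 hq, rfl⟩)

end Aux

open Real Complex
open scoped RealInnerProductSpace

theorem degree_eq_card_nearest (P : Set Plane) (hP : P.Finite)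
    (x : Plane) (hx : x ∈ vtx P) :
    {e : Set Plane | ∃ p ∈ P, ∃ p' ∈ P, p ≠ p' ∧ e = {p, p'} ∧
      x ∈ cell P p ∩ cell P p' ∧ (cell P p ∩ cell P p').Nontrivial}.ncard =
      (nearest P x).ncard := by
  classical
  set N := nearest P x with hNdef
  have hNP : N ⊆ P := fun p hp => hp.1
  have hNfin : N.Finite := hP.subset hNP
  have h3 : 3 ≤ N.ncard := by
    have hx' : 3 ≤ N.encard := hx
    rw [hNfin.encard_eq_coe_toFinset_card] at hx'
    rw [Set.ncard_eq_toFinset_card N hNfin]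
    exact_mod_cast hx'
  obtain ⟨p₀, hp₀⟩ : N.Nonempty := Set.nonempty_of_ncard_ne_zero (by omega)
  set r : ℝ := dist x p₀ with hrdef
  have hxP : x ∉ P := by
    intro hxp
    have hNx : ∀ p ∈ N, p = x := by
      intro p hp
      have h := hp.2 x hxp
      rw [dist_self] at h
      exact (dist_le_zero.1 h).symm
    have hsub : N ⊆ {x} := fun p hp => hNx p hp
    have := Set.ncard_le_ncard hsub (Set.finite_singleton x)
    simp [Set.ncard_singleton] at this
    omega
  have hrN : ∀ p ∈ N, dist x p = r :=
    fun p hp => le_antisymm (hp.2 p₀ (hNP hp₀)) (hp₀.2 p (hNP hp))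
  have hr0 : 0 < r := by
    rw [hrdef, dist_pos]
    intro h
    exact hxP (h ▸ hNP hp₀)
  have hrP : ∀ q ∈ P, q ∉ N → r < dist x q := by
    intro q hq hqN
    by_contra hc
    push_neg at hc
    exact hqN ⟨hq, fun q' hq' => le_trans hc (hp₀.2 q' hq')⟩
  set E : Plane → Plane → Prop := fun p p' =>
    ∃ u : Plane, u ≠ 0 ∧ ∀ q ∈ N, ⟪u, q - x⟫ ≤ ⟪u, p - x⟫ ∧ ⟪u, q - x⟫ ≤ ⟪u, p' - x⟫
    with hEdef
  have hnormr : ∀ q ∈ N, ‖q - x‖ = r := by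
    intro q hq
    rw [← dist_eq_norm, dist_comm]
    exact hrN q hq
  have hchar : {e : Set Plane | ∃ p ∈ P, ∃ p' ∈ P, p ≠ p' ∧ e = {p, p'} ∧
      x ∈ cell P p ∩ cell P p' ∧ (cell P p ∩ cell P p').Nontrivial}
      = {e : Set Plane | ∃ p ∈ N, ∃ p' ∈ N, p ≠ p' ∧ e = {p, p'} ∧ E p p'} := by
    ext e
    simp only [Set.mem_setOf_eq]
    constructor
    · rintro ⟨p, hp, p', hp', hpp', rfl, ⟨hxp, hxp'⟩, hnt⟩
      have hpN : p ∈ N := ⟨hp, hxp⟩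
      have hp'N : p' ∈ N := ⟨hp', hxp'⟩
      refine ⟨p, hpN, p', hp'N, hpp', rfl, ?_⟩
      obtain ⟨a, ha, b, hb, hab⟩ := hnt
      obtain ⟨y, hy, hyx⟩ : ∃ y ∈ cell P p ∩ cell P p', y ≠ x := by
        by_cases h : a = x
        · exact ⟨b, hb, fun hbx => hab (h.trans hbx.symm)⟩
        · exact ⟨a, ha, h⟩
      have hu0 : y - x ≠ 0 := sub_ne_zero.2 hyx
      refine ⟨y - x, hu0, fun q hq => ?_⟩
      have key : ∀ w, w ∈ N → (∀ q' ∈ P, dist y w ≤ dist y q') →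
          ⟪y - x, q - x⟫ ≤ ⟪y - x, w - x⟫ := by
        intro w hwN hyw
        have h1 : dist y w ≤ dist y q := hyw q (hNP hq)
        have e1 : dist y q ^2 = ‖y - x‖^2 - 2*⟪y - x, q - x⟫ + ‖q - x‖^2 := by
          rw [dist_eq_norm, show y - q = (y - x) - (q - x) by abel, norm_sub_sq_real]
        have e2 : dist y w ^2 = ‖y - x‖^2 - 2*⟪y - x, w - x⟫ + ‖w - x‖^2 := by
          rw [dist_eq_norm, show y - w = (y - x) - (w - x) by abel, norm_sub_sq_real]
        rw [hnormr q hq] at e1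
        rw [hnormr w hwN] at e2
        have hsq : dist y w ^2 ≤ dist y q ^2 :=
          pow_le_pow_left₀ dist_nonneg h1 2
        linarith
      exact ⟨key p hpN (fun q' hq' => hy.1 q' hq'), key p' hp'N (fun q' hq' => hy.2 q' hq')⟩
    · rintro ⟨p, hpN, p', hp'N, hpp', rfl, u, hu0, hu⟩
      refine ⟨p, hNP hpN, p', hNP hp'N, hpp', rfl, ⟨hpN.2, hp'N.2⟩, ?_⟩
      obtain ⟨t, ht0, htle⟩ := exists_pos_le (P \ N) (hP.subset Set.diff_subset)
          (fun q => (dist x q ^2 - r^2) / (2 * (|⟪u, q - x⟫ - ⟪u, p - x⟫| + 1)))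
          (fun q hq => by
            have := hrP q hq.1 hq.2
            apply div_pos
            · nlinarith [dist_nonneg (x := x) (y := q)]
            · positivity)
      have hbound : ∀ q ∈ P \ N, 2*t*(⟪u, q - x⟫ - ⟪u, p - x⟫) ≤ dist x q ^2 - r^2 := by
        intro q hq
        have h1 := htle q hq
        set b : ℝ := ⟪u, q - x⟫ - ⟪u, p - x⟫ with hb
        have hpos : (0:ℝ) < 2 * (|b| + 1) := by positivity
        rw [le_div_iff₀ hpos] at h1
        have hble : b ≤ |b| + 1 := le_trans (le_abs_self b) (by linarith)
        nlinarith [abs_nonneg b]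
      set y : Plane := x + t • u with hydef
      have hyx : y ≠ x := by
        intro h
        apply hu0
        have h2 : t • u = 0 := by
          have := congrArg (fun z => z - x) h
          simpa [hydef] using this
        rcases smul_eq_zero.1 h2 with h3 | h3
        · exact absurd h3 ht0.ne'
        · exact h3
      have hdist : ∀ q : Plane, dist y q ^2 = t^2*‖u‖^2 - 2*t*⟪u, q - x⟫ + ‖q - x‖^2 := by
        intro q
        rw [dist_eq_norm, show y - q = t•u - (q - x) by rw [hydef]; abel, norm_sub_sq_real,
          real_inner_smul_left, norm_smul]
        simp [mul_pow, Real.norm_eq_abs, sq_abs]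
        ring
      have hcellmem : ∀ w, w ∈ N → ⟪u, w - x⟫ = ⟪u, p - x⟫ →
          (∀ q ∈ N, ⟪u, q - x⟫ ≤ ⟪u, w - x⟫) → y ∈ cell P w := by
        intro w hwN hwp hw q hq
        have hsq : dist y w ^2 ≤ dist y q ^2 := by
          rw [hdist, hdist, hnormr w hwN]
          by_cases hqN : q ∈ N
          · have := hw q hqN
            rw [hnormr q hqN]
            nlinarith
          · have h2 := hbound q ⟨hq, hqN⟩
            have h3 : ‖q - x‖ = dist x q := by rw [← dist_eq_norm, dist_comm]
            rw [h3, hwp]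
            nlinarith
        rw [← Real.sqrt_sq (dist_nonneg (x := y) (y := w)),
          ← Real.sqrt_sq (dist_nonneg (x := y) (y := q))]
        exact Real.sqrt_le_sqrt hsq
      have hwp' : ⟪u, p' - x⟫ = ⟪u, p - x⟫ :=
        le_antisymm (hu p' hp'N).1 (hu p hpN).2
      have hyp : y ∈ cell P p := hcellmem p hpN rfl (fun q hq => (hu q hq).1)
      have hyp' : y ∈ cell P p' := hcellmem p' hp'N hwp'
        (fun q hq => le_trans (hu q hq).1 hwp'.symm.le)
      exact ⟨y, ⟨hyp, hyp'⟩, x, ⟨hpN.2, hp'N.2⟩, hyx⟩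
  rw [hchar]
  -- angles
  set θf : Plane → ℝ := fun q => (toC (q - x)).arg with hθf
  have habsC : ∀ q ∈ N, ‖toC (q - x)‖ = r := by
    intro q hq
    rw [← norm_plane]
    exact hnormr q hq
  have hθinj : Set.InjOn θf N := by
    intro a ha b hb hab
    have h1 : toC (a - x) = toC (b - x) := by
      rw [← Complex.norm_mul_exp_arg_mul_I (toC (a - x)),
        ← Complex.norm_mul_exp_arg_mul_I (toC (b - x)), habsC a ha, habsC b hb]
      simp only [hθf] at hab
      rw [hab]
    have h2 := toC_inj h1
    exact sub_left_inj.1 h2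
  set Θ : Finset ℝ := hNfin.toFinset.image θf with hΘ
  have hmemΘ : ∀ α, α ∈ Θ ↔ ∃ q ∈ N, θf q = α := by
    intro α
    simp [hΘ, Set.Finite.mem_toFinset]
  have hΘcard : Θ.card = N.ncard := by
    rw [hΘ, Finset.card_image_of_injOn (by rw [Set.Finite.coe_toFinset]; exact hθinj),
      ← Set.ncard_eq_toFinset_card N hNfin]
  have hsubΘ : ∀ α ∈ Θ, α ∈ Set.Ioc (-π) π := by
    intro α hα
    obtain ⟨q, _, rfl⟩ := (hmemΘ α).1 hα
    exact Complex.arg_mem_Ioc _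
  have htrans : ∀ p ∈ N, ∀ p' ∈ N, (E p p' ↔ Adj Θ (θf p) (θf p')) := by
    intro p hpN p' hp'N
    constructor
    · rintro ⟨u, hu0, hu⟩
      have hC : toC u ≠ 0 := fun h => hu0 (toC_inj (h.trans toC_zero.symm))
      have hR : 0 < ‖toC u‖ * r := mul_pos (norm_pos_iff.mpr hC) hr0
      have key : ∀ w ∈ N, ⟪u, w - x⟫
          = (‖toC u‖ * r) * Real.cos (θf w - (toC u).arg) := by
        intro w hw
        rw [inner_toC, ipcos, habsC w hw]
        ring
      refine ⟨(toC u).arg, fun α hα => ?_⟩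
      obtain ⟨q, hqN, rfl⟩ := (hmemΘ α).1 hα
      constructor
      · have h1 := (hu q hqN).1
        rw [key q hqN, key p hpN] at h1
        exact (mul_le_mul_iff_right₀ hR).1 h1
      · have h1 := (hu q hqN).2
        rw [key q hqN, key p' hp'N] at h1
        exact (mul_le_mul_iff_right₀ hR).1 h1
    · rintro ⟨φ, hφ⟩
      set u : Plane := !₂[Real.cos φ, Real.sin φ] with hu
      have hCu : toC u = Complex.exp (φ * Complex.I) := by
        rw [Complex.exp_mul_I]
        simp [toC, hu, Complex.ext_iff, ← Complex.ofReal_cos, ← Complex.ofReal_sin]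
      have hu0 : u ≠ 0 := by
        intro h
        have h1 : toC u = 0 := by rw [h, toC_zero]
        rw [hCu] at h1
        exact Complex.exp_ne_zero _ h1
      refine ⟨u, hu0, fun q hqN => ?_⟩
      have key : ∀ w ∈ N, ⟪u, w - x⟫ = r * Real.cos (θf w - φ) := by
        intro w hw
        rw [inner_toC, hCu, ipcos2, habsC w hw]
      have hq' : θf q ∈ Θ := (hmemΘ _).2 ⟨q, hqN, rfl⟩
      obtain ⟨c1, c2⟩ := hφ (θf q) hq'
      constructor
      · rw [key q hqN, key p hpN]
        exact mul_le_mul_of_nonneg_left c1 hr0.le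
      · rw [key q hqN, key p' hp'N]
        exact mul_le_mul_of_nonneg_left c2 hr0.le
  have hinj2 : Set.InjOn (Set.image θf)
      {e : Set Plane | ∃ p ∈ N, ∃ p' ∈ N, p ≠ p' ∧ e = {p, p'} ∧ E p p'} := by
    rintro e1 ⟨p, hp, p', hp', -, rfl, -⟩ e2 ⟨q, hq, q', hq', -, rfl, -⟩ h12
    refine (hθinj.image_eq_image_iff ?_ ?_).1 h12
    · rintro z (rfl | rfl)
      exacts [hp, hp']
    · rintro z (rfl | rfl)
      exacts [hq, hq']
  have himg2 : (Set.image θf) '' {e : Set Plane | ∃ p ∈ N, ∃ p' ∈ N, p ≠ p' ∧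
        e = {p, p'} ∧ E p p'}
      = {e : Set ℝ | ∃ s ∈ Θ, ∃ t ∈ Θ, s ≠ t ∧ e = {s, t} ∧ Adj Θ s t} := by
    ext e
    constructor
    · rintro ⟨e', ⟨p, hpN, p', hp'N, hpp', rfl, hE'⟩, rfl⟩
      refine ⟨θf p, (hmemΘ _).2 ⟨p, hpN, rfl⟩, θf p', (hmemΘ _).2 ⟨p', hp'N, rfl⟩,
        fun h => hpp' (hθinj hpN hp'N h), ?_, (htrans p hpN p' hp'N).1 hE'⟩
      rw [Set.image_pair]
    · rintro ⟨s, hs, t, ht, hst, rfl, hadj⟩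
      obtain ⟨p, hpN, rfl⟩ := (hmemΘ s).1 hs
      obtain ⟨p', hp'N, rfl⟩ := (hmemΘ t).1 ht
      exact ⟨{p, p'}, ⟨p, hpN, p', hp'N, fun h => hst (by rw [h]), rfl,
        (htrans p hpN p' hp'N).2 hadj⟩, Set.image_pair θf p p'⟩
  rw [← Set.ncard_image_of_injOn hinj2, himg2,
    core_count Θ hsubΘ (by omega), hΘcard]
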